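/- Let r(x) = Σ_{l=0}^{2^m−1} r̄_l X̄_l(x) over F_{2^m}. When r is divided (with remainder) by the monic-scalar-multiple polynomial p·X̄_{2^m−2^μ}(x), the quotient is u(x) = Σ_{j=0}^{2^μ−1} (r̄_{j+2^m−2^μ}/p)·X̄_j(x), where p = p_{2^m−2^μ} is the normalizing constant making p·X̄_{2^m−2^μ} monic. -/

import Mathlib

open Polynomial

private theorem stmt_18_bitSum : ∀ k : ℕ, ∀ l < 2 ^ k,
    ∑ τ ∈ Finset.range k, (if Nat.testBit l τ then 2 ^ τ else 0) = l := by
  intro k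
  induction k with
  | zero => intro l h; interval_cases l; simp
  | succ k ih =>
    intro l h
    rw [Finset.sum_range_succ]
    have h2 : l % 2 ^ k < 2 ^ k := Nat.mod_lt _ (Nat.pow_pos (by norm_num))
    have h1 := ih (l % 2 ^ k) h2
    have h3 : ∑ τ ∈ Finset.range k, (if Nat.testBit l τ then 2 ^ τ else 0)
        = l % 2 ^ k := by
      rw [← h1]
      refine Finset.sum_congr rfl fun τ hτ => ?_
      rw [Nat.testBit_mod_two_pow]
      simp [Finset.mem_range.mp hτ]
    rw [h3]
    have h4 : Nat.testBit l k = decide (l / 2 ^ k % 2 = 1) := Nat.testBit_eq_decide_div_mod_eq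
    have h5 : l / 2 ^ k < 2 := by
      apply Nat.div_lt_of_lt_mul; rw [pow_succ] at h; omega
    have h6 : l % 2 ^ k + 2 ^ k * (l / 2 ^ k) = l := Nat.mod_add_div l (2 ^ k)
    rw [h4]
    obtain h7 | h7 : l / 2 ^ k = 0 ∨ l / 2 ^ k = 1 := by
      rcases Nat.lt_or_ge (l / 2 ^ k) 1 with h | h
      · exact Or.inl (Nat.lt_one_iff.mp h)
      · exact Or.inr (le_antisymm (Nat.le_of_lt_succ h5) h)
    all_goals rw [h7] at h6 ⊢ <;> norm_num at h6 ⊢ <;> omega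

/-- Writing `r = Σ_{l<2^m} r̄_l X̄_l` in the novel polynomial basis, the
quotient of `r` upon division by the monic polynomial `p·X̄_{2^m-2^μ}` is
`u = Σ_{j<2^μ} (r̄_{j+2^m-2^μ}/p)·X̄_j`. -/
theorem stmt_18 {F : Type*} [Field F] [CharP F 2] (m μ : ℕ) (hμ : μ ≤ m)
    (v : Fin m → F)
    (ω : ℕ → F) (hω : ∀ l, ω l = ∑ t : Fin m, if l.testBit t then v t else 0)
    (s : Fin m → Polynomial F)
    (hs : ∀ τ : Fin m, s τ = ∏ l ∈ Finset.range (2 ^ (τ : ℕ)), (X - C (ω l)))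
    (hsv : ∀ τ : Fin m, (s τ).eval (v τ) ≠ 0)
    (Xb : ℕ → Polynomial F)
    (hXb : ∀ l, Xb l = ∏ τ : Fin m,
      if l.testBit τ then C ((s τ).eval (v τ))⁻¹ * s τ else 1)
    (p : F) (hp : p ≠ 0) (hmonic : (C p * Xb (2 ^ m - 2 ^ μ)).Monic)
    (rc : ℕ → F) (r : Polynomial F)
    (hr : r = ∑ l ∈ Finset.range (2 ^ m), C (rc l) * Xb l) :
    r /ₘ (C p * Xb (2 ^ m - 2 ^ μ)) =
      ∑ j ∈ Finset.range (2 ^ μ), C (rc (j + 2 ^ m - 2 ^ μ) / p) * Xb j := by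
  have hpow : (2 : ℕ) ^ μ ≤ 2 ^ m := Nat.pow_le_pow_right (by norm_num) hμ
  have hμ1 : (1 : ℕ) ≤ 2 ^ μ := Nat.one_le_two_pow
  set N := 2 ^ m - 2 ^ μ with hNdef
  -- basic facts about the factors
  have hsmonic : ∀ τ, (s τ).Monic := fun τ => by
    rw [hs]; exact monic_prod_of_monic _ _ fun l _ => monic_X_sub_C _
  have hsdeg : ∀ τ : Fin m, (s τ).natDegree = 2 ^ (τ : ℕ) := fun τ => by
    rw [hs, Polynomial.natDegree_prod _ _ (fun l _ => X_sub_C_ne_zero _)]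
    simp
  have hfne : ∀ τ : Fin m, C ((s τ).eval (v τ))⁻¹ * s τ ≠ 0 := fun τ =>
    mul_ne_zero (by simp [hsv τ]) (hsmonic τ).ne_zero
  have hfdeg : ∀ τ : Fin m, (C ((s τ).eval (v τ))⁻¹ * s τ).natDegree = 2 ^ (τ : ℕ) :=
    fun τ => by
      rw [Polynomial.natDegree_C_mul (inv_ne_zero (hsv τ)), hsdeg τ]
  have hXbne : ∀ l, Xb l ≠ 0 := fun l => by
    rw [hXb]
    exact Finset.prod_ne_zero_iff.mpr fun τ _ => by
      split
      · exact hfne τ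
      · exact one_ne_zero
  have hXdeg : ∀ l < 2 ^ m, (Xb l).natDegree = l := fun l hl => by
    rw [hXb, Polynomial.natDegree_prod _ _ (fun τ _ => by
      split
      · exact hfne τ
      · exact one_ne_zero)]
    have : ∀ τ : Fin m,
        (if l.testBit τ then C ((s τ).eval (v τ))⁻¹ * s τ else 1).natDegree
          = if l.testBit (τ : ℕ) then 2 ^ (τ : ℕ) else 0 := fun τ => by
      split <;> simp [hfdeg τ]
    rw [Finset.sum_congr rfl fun τ _ => this τ,
      Fin.sum_univ_eq_sum_range (fun t => if l.testBit t then 2 ^ t else 0) m,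
      stmt_18_bitSum m l hl]
  -- bit structure of N = 2^m - 2^μ
  have hNval : 2 ^ μ * (2 ^ (m - μ) - 1) = N := by
    rw [Nat.mul_sub_one, ← pow_add, Nat.add_sub_cancel' hμ]
  have htN : ∀ τ : ℕ, Nat.testBit N τ = (decide (μ ≤ τ) && decide (τ < m)) := fun τ => by
    rw [← hNval, Nat.mul_comm, Nat.testBit_mul_two_pow, Nat.testBit_two_pow_sub_one]
    by_cases hτ : μ ≤ τ <;> simp [hτ] <;> omega
  have htj : ∀ j < 2 ^ μ, ∀ τ : ℕ, μ ≤ τ → Nat.testBit j τ = false := fun j hj τ hτ =>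
    Nat.testBit_lt_two_pow (lt_of_lt_of_le hj (Nat.pow_le_pow_right (by norm_num) hτ))
  have hadd : ∀ j < 2 ^ μ, ∀ τ : ℕ,
      Nat.testBit (j + N) τ = (Nat.testBit N τ || Nat.testBit j τ) := by
    intro j hj τ
    rw [Nat.add_comm, ← hNval, Nat.testBit_two_pow_mul_add _ hj, hNval, htN τ]
    by_cases hτ : τ < μ
    · simp [hτ, Nat.not_le_of_lt hτ]
    · rw [if_neg hτ, Nat.testBit_two_pow_sub_one, htj j hj τ (Nat.le_of_not_lt hτ)]
      by_cases hm : τ < m <;> simp [hm, Nat.le_of_not_lt hτ] <;> omega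
  -- multiplicativity
  have hmul : ∀ j < 2 ^ μ, Xb (j + N) = Xb N * Xb j := by
    intro j hj
    rw [hXb (j + N), hXb N, hXb j, ← Finset.prod_mul_distrib]
    refine Finset.prod_congr rfl fun τ _ => ?_
    rw [hadd j hj τ]
    by_cases h1 : Nat.testBit N (τ : ℕ) <;> by_cases h2 : Nat.testBit j (τ : ℕ)
    · exfalso
      have hμτ : μ ≤ (τ : ℕ) := by
        have := htN (τ : ℕ)
        rw [h1] at this
        simpa using (Bool.and_eq_true _ _ ▸ this.symm) |>.1 |> of_decide_eq_true
      rw [htj j hj (τ : ℕ) hμτ] at h2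
      exact Bool.false_ne_true h2
    all_goals simp [h1, h2]
  -- degrees
  have hNlt : N < 2 ^ m := by omega
  have hdegd : (C p * Xb N).degree = (N : WithBot ℕ) := by
    rw [degree_eq_natDegree hmonic.ne_zero, Polynomial.natDegree_C_mul hp, hXdeg N hNlt]
  have hrem : (∑ l ∈ Finset.range N, C (rc l) * Xb l).degree < (C p * Xb N).degree := by
    rw [hdegd]
    refine lt_of_le_of_lt (Polynomial.degree_sum_le _ _) ?_
    rw [Finset.sup_lt_iff (by exact_mod_cast WithBot.bot_lt_coe N)]
    intro l hl
    have hlN : l < N := Finset.mem_range.mp hl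
    calc (C (rc l) * Xb l).degree ≤ (Xb l).degree := by
          refine le_trans (degree_mul_le _ _) ?_
          calc (C (rc l)).degree + (Xb l).degree ≤ 0 + (Xb l).degree :=
                add_le_add_left degree_C_le _
            _ = (Xb l).degree := zero_add _
      _ = (l : WithBot ℕ) := by
          rw [degree_eq_natDegree (hXbne l), hXdeg l (by omega)]
      _ < (N : WithBot ℕ) := by exact_mod_cast hlN
  -- the division identity
  have hsplit : r = (∑ l ∈ Finset.range N, C (rc l) * Xb l)
      + ∑ j ∈ Finset.range (2 ^ μ), C (rc (N + j)) * Xb (N + j) := by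
    rw [hr, show 2 ^ m = N + 2 ^ μ by omega, Finset.sum_range_add]
  have hdu : (C p * Xb N) * (∑ j ∈ Finset.range (2 ^ μ), C (rc (j + 2 ^ m - 2 ^ μ) / p) * Xb j)
      = ∑ j ∈ Finset.range (2 ^ μ), C (rc (N + j)) * Xb (N + j) := by
    rw [Finset.mul_sum]
    refine Finset.sum_congr rfl fun j hj => ?_
    have hj' := Finset.mem_range.mp hj
    have e1 : j + 2 ^ m - 2 ^ μ = N + j := by omega
    have e2 : Xb (N + j) = Xb N * Xb j := by rw [Nat.add_comm]; exact hmul j hj'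
    have e3 : C p * C (rc (N + j) / p) = C (rc (N + j)) := by
      rw [← C_mul]
      congr 1
      field_simp
    rw [e1, e2, show C p * Xb N * (C (rc (N + j) / p) * Xb j)
        = (C p * C (rc (N + j) / p)) * (Xb N * Xb j) by ring, e3]
  exact (Polynomial.div_modByMonic_unique _ _ hmonic ⟨by rw [hdu]; exact hsplit.symm, hrem⟩).1
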